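/- Let D and D' be the induced multidegrees on the subdivided graph Γ̃ of two admissible multidegrees on (Γ, 𝐧). If D' is obtained from D by a finite sequence of chip-firing moves and inverse chip-firing moves performed only at vertices of V(Γ̃)∖V(Γ) (i.e., only at new vertices inserted by the subdivision), then D = D'. -/

import Mathlib

open scoped Classical

namespace LLS

variable {V E : Type*}

/-- `σ(e,v)`: `1` if `v` is the tail of `e`, `-1` if `v` is the head of `e`, `0` otherwise. -/
noncomputable def sigma (tail head : E → V) (e : E) (v : V) : ℤ :=
  if tail e = v then 1 else if head e = v then -1 else 0

/-- The endpoint of `e` other than `v` (for `e` adjacent to `v`). -/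
noncomputable def otherEnd (tail head : E → V) (e : E) (v : V) : V :=
  if tail e = v then head e else tail e

/-- The multigraph is loopless. -/
def Loopless (tail head : E → V) : Prop := ∀ e, tail e ≠ head e

/-- The multigraph is connected. -/
def MGConnected (tail head : E → V) : Prop :=
  ∀ u v : V, Relation.ReflTransGen
    (fun a b => ∃ e, (tail e = a ∧ head e = b) ∨ (tail e = b ∧ head e = a)) u v

/-- An admissible multidegree on `(Γ, 𝐧)`: a function `V(Γ) → ℤ` together with an
element `μ(e) ∈ ℤ/𝐧(e)ℤ` for each edge `e`. -/
structure AdmMD (V E : Type*) (n : E → ℕ) where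
  wV : V → ℤ
  mu : ∀ e : E, ZMod (n e)

section FinGraph

variable [Fintype V] [Fintype E] [DecidableEq V] [DecidableEq E]

/-- The twist of an admissible multidegree at a vertex `v`. -/
noncomputable def twist (tail head : E → V) (n : E → ℕ) (w : AdmMD V E n) (v : V) :
    AdmMD V E n where
  wV u := w.wV u
    - (if u = v then ((Finset.univ.filter fun e : E =>
        sigma tail head e v ≠ 0 ∧ w.mu e = 0).card : ℤ) else 0)
    + ((Finset.univ.filter fun e : E => sigma tail head e v ≠ 0 ∧
        w.mu e + (sigma tail head e v : ZMod (n e)) = 0 ∧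
        otherEnd tail head e v = u).card : ℤ)
  mu e := w.mu e + (sigma tail head e v : ZMod (n e))

/-- The negative twist of an admissible multidegree at a vertex `v`
(the inverse of `twist`). -/
noncomputable def negTwist (tail head : E → V) (n : E → ℕ) (w : AdmMD V E n) (v : V) :
    AdmMD V E n where
  wV u := w.wV u
    + (if u = v then ((Finset.univ.filter fun e : E => sigma tail head e v ≠ 0 ∧
        w.mu e - (sigma tail head e v : ZMod (n e)) = 0).card : ℤ) else 0)
    - ((Finset.univ.filter fun e : E => sigma tail head e v ≠ 0 ∧
        w.mu e = 0 ∧ otherEnd tail head e v = u).card : ℤ)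
  mu e := w.mu e - (sigma tail head e v : ZMod (n e))

/-- An admissible multidegree is concentrated at `v` if there is an ordering of all
vertices starting with `v` such that composing the negative twists at all previous
vertices makes the multidegree negative at each subsequent vertex. -/
def Concentrated (tail head : E → V) (n : E → ℕ) (w : AdmMD V E n) (v : V) : Prop :=
  ∃ l : List V, l.Nodup ∧ (∀ x : V, x ∈ l) ∧ l.head? = some v ∧
    ∀ (i : ℕ) (h : i < l.length), 0 < i →
      (((l.take i).foldl (negTwist tail head n) w).wV (l.get ⟨i, h⟩)) < 0

/-- `w` is obtained from `w₀` by a finite sequence of twists, i.e. `w ∈ V(G(w₀))`. -/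
def TwistSeq (tail head : E → V) (n : E → ℕ) (w₀ w : AdmMD V E n) : Prop :=
  ∃ l : List V, l.foldl (twist tail head n) w₀ = w

/-- `l` records the successive twist vertices of a minimal path from `w` to `w'`
in `G(w₀)`. -/
def IsMinPath (tail head : E → V) (n : E → ℕ) (w w' : AdmMD V E n) (l : List V) : Prop :=
  l.foldl (twist tail head n) w = w' ∧
    ∀ l' : List V, l'.foldl (twist tail head n) w = w' → l.length ≤ l'.length

/-- The membership condition describing the subgraph `Ḡ(w₀)` of `G(w₀)`:
no minimal path from `w` to `w_v` involves twisting at `v`. -/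
def InBarG (tail head : E → V) (n : E → ℕ) (w₀ : AdmMD V E n) (wv : V → AdmMD V E n)
    (w : AdmMD V E n) : Prop :=
  TwistSeq tail head n w₀ w ∧
    ∀ (v : V) (l : List V), IsMinPath tail head n w (wv v) l → v ∉ l

/-- Edges joining `v` and `u`. -/
noncomputable def edgesBetween (tail head : E → V) (v u : V) : Finset E :=
  Finset.univ.filter fun e => (tail e = v ∧ head e = u) ∨ (head e = v ∧ tail e = u)

/-- Edges adjacent to `v`. -/
noncomputable def edgesAdj (tail head : E → V) (v : V) : Finset E :=
  Finset.univ.filter fun e => tail e = v ∨ head e = v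

/-- The change of a divisor effected by a single chip-firing move at `v`. -/
noncomputable def fireDelta (tail head : E → V) (v : V) : V → ℤ := fun u =>
  ((edgesBetween tail head v u).card : ℤ)
    - (if u = v then ((edgesAdj tail head v).card : ℤ) else 0)

/-- A chip-firing move (twist) at `v`. -/
noncomputable def chipFire (tail head : E → V) (D : V → ℤ) (v : V) : V → ℤ :=
  fun u => D u + fireDelta tail head v u

/-- The inverse of a chip-firing move at `v`. -/
noncomputable def negChipFire (tail head : E → V) (D : V → ℤ) (v : V) : V → ℤ :=
  fun u => D u - fireDelta tail head v u

/-- A divisor (multidegree) on a graph is concentrated at `v`. -/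
def ConcentratedDiv (tail head : E → V) (D : V → ℤ) (v : V) : Prop :=
  ∃ l : List V, l.Nodup ∧ (∀ x : V, x ∈ l) ∧ l.head? = some v ∧
    ∀ (i : ℕ) (h : i < l.length), 0 < i →
      (((l.take i).foldl (negChipFire tail head) D) (l.get ⟨i, h⟩)) < 0

/-- A divisor on a graph is `v₀`-reduced. -/
def VReduced (tail head : E → V) (D : V → ℤ) (v₀ : V) : Prop :=
  (∀ u, u ≠ v₀ → 0 ≤ D u) ∧
    ∀ S : Finset V, S.Nonempty → v₀ ∉ S →
      ∃ v ∈ S, D v < ((Finset.univ.filter fun e : E =>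
        (tail e = v ∧ head e ∉ S) ∨ (head e = v ∧ tail e ∉ S)).card : ℤ)

/-- The function `D_{w,v}` on edges of `Γ` determined by a path `l` from `w` to `w_v`. -/
noncomputable def DFun (tail head : E → V) (n : E → ℕ) (w : AdmMD V E n) (l : List V)
    (v : V) (et : E) : ℤ :=
  (((Finset.univ : Finset (Fin l.length)).filter fun j =>
      l.get j = otherEnd tail head et v ∧
        ((l.take (j.val + 1)).foldl (twist tail head n) w).mu et = 0).card : ℤ)
  - (((Finset.univ : Finset (Fin l.length)).filter fun j =>
      l.get j = v ∧ ((l.take j.val).foldl (twist tail head n) w).mu et = 0).card : ℤ)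

end FinGraph

/-- The tail map of the subdivided graph `Γ̃`: the edge `e` of `Γ` is subdivided into
`𝐧(e)` edges `(e, j)`, `j = 0, …, 𝐧(e) - 1`, numbered from the tail of `e`; the new
vertices over `e` are `(e, i)`, `i = 0, …, 𝐧(e) - 2`, with `(e, i)` being the
`(i+1)`-st new vertex from the tail of `e`. -/
def tailT (tail head : E → V) (n : E → ℕ) :
    (Σ e : E, Fin (n e)) → V ⊕ Σ e : E, Fin (n e - 1) := fun p =>
  if h : p.2.val = 0 then Sum.inl (tail p.1)
  else Sum.inr ⟨p.1, ⟨p.2.val - 1, by have := p.2.isLt; omega⟩⟩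

/-- The head map of the subdivided graph `Γ̃`. -/
def headT (tail head : E → V) (n : E → ℕ) :
    (Σ e : E, Fin (n e)) → V ⊕ Σ e : E, Fin (n e - 1) := fun p =>
  if h : p.2.val = n p.1 - 1 then Sum.inl (head p.1)
  else Sum.inr ⟨p.1, ⟨p.2.val, by have := p.2.isLt; omega⟩⟩

/-- The multidegree on the subdivided graph `Γ̃` induced by an admissible multidegree:
it agrees with `w` on old vertices, is `1` on the `μ(e)`-th new vertex over `e`
when `μ(e) ≠ 0`, and is `0` on all other new vertices. -/
noncomputable def inducedMD (n : E → ℕ) (w : AdmMD V E n) :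
    (V ⊕ Σ e : E, Fin (n e - 1)) → ℤ
  | Sum.inl v => w.wV v
  | Sum.inr ⟨e, i⟩ => if (w.mu e).val = i.val + 1 then 1 else 0

/-- The simple graph `Γ̄` associated to the multigraph `Γ`: same vertices, one edge
between each pair of adjacent vertices. -/
def barGraph (tail head : E → V) : SimpleGraph V where
  Adj u v := u ≠ v ∧ ∃ e, (tail e = u ∧ head e = v) ∨ (tail e = v ∧ head e = u)
  symm := by
    constructor
    intro u v h
    exact ⟨h.1.symm, h.2.imp fun e he => he.symm⟩
  loopless := by
    constructor
    intro u h
    exact h.1 rfl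


section Statement6Aux

lemma sigma_fin_mk_eq {E : Type*} (κ : E → ℕ) (f e : E) (j : Fin (κ f)) (k : Fin (κ e)) :
    (⟨f, j⟩ : Σ x : E, Fin (κ x)) = ⟨e, k⟩ ↔ f = e ∧ (j : ℕ) = (k : ℕ) := by
  constructor
  · intro h
    obtain ⟨rfl, h2⟩ := Sigma.mk.inj_iff.mp h
    exact ⟨rfl, congrArg Fin.val (eq_of_heq h2)⟩
  · rintro ⟨rfl, h⟩
    exact congrArg _ (Fin.ext h)

variable {E : Type*} (n : E → ℕ) in
lemma sigma_fin_mk_eq₀ (f e : E) (j : Fin (n f)) (k : Fin (n e)) :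
    (⟨f, j⟩ : Σ x : E, Fin (n x)) = ⟨e, k⟩ ↔ f = e ∧ (j : ℕ) = (k : ℕ) :=
  sigma_fin_mk_eq n f e j k

variable {E : Type*} (n : E → ℕ) in
lemma sigma_fin_mk_eq₁ (f e : E) (j : Fin (n f - 1)) (k : Fin (n e - 1)) :
    (⟨f, j⟩ : Σ x : E, Fin (n x - 1)) = ⟨e, k⟩ ↔ f = e ∧ (j : ℕ) = (k : ℕ) :=
  sigma_fin_mk_eq (fun x => n x - 1) f e j k

variable {V E : Type*} (tail head : E → V) (n : E → ℕ)

lemma tailT_eq_inr (f : E) (j : Fin (n f)) (e : E) (i : Fin (n e - 1)) :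
    tailT tail head n ⟨f, j⟩ = Sum.inr ⟨e, i⟩ ↔ f = e ∧ (j : ℕ) = (i : ℕ) + 1 := by
  unfold tailT
  dsimp only
  split_ifs with hj
  · constructor
    · intro h; simp at h
    · rintro ⟨rfl, h⟩; omega
  · rw [Sum.inr.injEq, sigma_fin_mk_eq₁]
    simp only [Fin.val_mk]
    constructor
    · rintro ⟨rfl, h⟩; exact ⟨rfl, by omega⟩
    · rintro ⟨rfl, h⟩; exact ⟨rfl, by omega⟩

lemma headT_eq_inr (f : E) (j : Fin (n f)) (e : E) (i : Fin (n e - 1)) :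
    headT tail head n ⟨f, j⟩ = Sum.inr ⟨e, i⟩ ↔ f = e ∧ (j : ℕ) = (i : ℕ) := by
  unfold headT
  dsimp only
  split_ifs with hj
  · constructor
    · intro h; simp at h
    · rintro ⟨rfl, h⟩; have := i.isLt; omega
  · rw [Sum.inr.injEq, sigma_fin_mk_eq₁]

section Fin6

variable [Fintype V] [Fintype E] [DecidableEq V] [DecidableEq E]

lemma edgesAdj_inr_card (e' : E) (i' : Fin (n e' - 1)) :
    (edgesAdj (tailT tail head n) (headT tail head n) (Sum.inr ⟨e', i'⟩)).card = 2 := by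
  have h1 : (i' : ℕ) < n e' := by have := i'.isLt; omega
  have h2 : (i' : ℕ) + 1 < n e' := by have := i'.isLt; omega
  have hset : edgesAdj (tailT tail head n) (headT tail head n) (Sum.inr ⟨e', i'⟩)
      = {(⟨e', ⟨(i' : ℕ) + 1, h2⟩⟩ : Σ f : E, Fin (n f)), ⟨e', ⟨(i' : ℕ), h1⟩⟩} := by
    ext ⟨f, j⟩
    simp only [edgesAdj, Finset.mem_filter, Finset.mem_univ, true_and, tailT_eq_inr,
      headT_eq_inr, Finset.mem_insert, Finset.mem_singleton, sigma_fin_mk_eq₀]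
  rw [hset, Finset.card_insert_of_notMem, Finset.card_singleton]
  simp only [Finset.mem_singleton, sigma_fin_mk_eq₀]
  rintro ⟨-, h⟩
  omega

lemma fireDelta_inr_inr (p : Σ e : E, Fin (n e - 1)) (e : E) (i : Fin (n e - 1)) :
    fireDelta (tailT tail head n) (headT tail head n) (Sum.inr p) (Sum.inr ⟨e, i⟩)
      = (if p.1 = e ∧ (p.2 : ℕ) + 1 = (i : ℕ) then 1 else 0)
        + (if p.1 = e ∧ (p.2 : ℕ) = (i : ℕ) + 1 then 1 else 0)
        - 2 * (if p = ⟨e, i⟩ then 1 else 0) := by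
  obtain ⟨e', i'⟩ := p
  dsimp only
  by_cases hv : (⟨e', i'⟩ : Σ e : E, Fin (n e - 1)) = ⟨e, i⟩
  · obtain ⟨rfl, hvv⟩ := (sigma_fin_mk_eq₁ n _ _ _ _).mp hv
    have : i' = i := Fin.ext hvv
    subst this
    have hB0 : edgesBetween (tailT tail head n) (headT tail head n)
        (Sum.inr ⟨e', i'⟩) (Sum.inr ⟨e', i'⟩) = ∅ := by
      unfold edgesBetween
      rw [Finset.filter_eq_empty_iff]
      rintro ⟨f, j⟩ -
      simp only [tailT_eq_inr, headT_eq_inr]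
      rintro (⟨⟨rfl, h1⟩, -, h2⟩ | ⟨⟨rfl, h1⟩, -, h2⟩) <;> omega
    unfold fireDelta
    rw [hB0, if_pos rfl, edgesAdj_inr_card]
    rw [if_pos rfl, if_neg (fun h => by omega), if_neg (fun h => by omega)]
    simp
  · have hv' : (Sum.inr (⟨e, i⟩ : Σ e : E, Fin (n e - 1)) : V ⊕ Σ e : E, Fin (n e - 1)) ≠ Sum.inr ⟨e', i'⟩ := by
      simp only [ne_eq, Sum.inr.injEq]
      exact fun h => hv h.symm
    unfold fireDelta
    rw [if_neg hv']
    by_cases hc1 : e' = e ∧ (i' : ℕ) + 1 = (i : ℕ)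
    · have hc2 : ¬ (e' = e ∧ (i' : ℕ) = (i : ℕ) + 1) := by rintro ⟨-, h⟩; omega
      have hlt : (i : ℕ) < n e := by have := i.isLt; omega
      have hset : edgesBetween (tailT tail head n) (headT tail head n)
          (Sum.inr ⟨e', i'⟩) (Sum.inr ⟨e, i⟩) = {(⟨e, ⟨(i : ℕ), hlt⟩⟩ : Σ f : E, Fin (n f))} := by
        ext ⟨f, j⟩
        simp only [edgesBetween, Finset.mem_filter, Finset.mem_univ, true_and,
          tailT_eq_inr, headT_eq_inr, Finset.mem_singleton, sigma_fin_mk_eq₀]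
        obtain ⟨rfl, hc1'⟩ := hc1
        constructor
        · rintro (⟨⟨rfl, h1⟩, -, h2⟩ | ⟨⟨rfl, h1⟩, -, h2⟩) <;> exact ⟨rfl, by omega⟩
        · rintro ⟨rfl, hj⟩
          exact Or.inl ⟨⟨rfl, by omega⟩, rfl, by omega⟩
      rw [hset, Finset.card_singleton, if_pos hc1, if_neg hc2, if_neg hv]
      norm_num
    · by_cases hc2 : e' = e ∧ (i' : ℕ) = (i : ℕ) + 1
      · have hlt : (i' : ℕ) < n e := by
          have := i'.isLt; obtain ⟨rfl, -⟩ := hc2; omega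
        have hset : edgesBetween (tailT tail head n) (headT tail head n)
            (Sum.inr ⟨e', i'⟩) (Sum.inr ⟨e, i⟩)
            = {(⟨e, ⟨(i' : ℕ), hlt⟩⟩ : Σ f : E, Fin (n f))} := by
          ext ⟨f, j⟩
          simp only [edgesBetween, Finset.mem_filter, Finset.mem_univ, true_and,
            tailT_eq_inr, headT_eq_inr, Finset.mem_singleton, sigma_fin_mk_eq₀]
          obtain ⟨rfl, hc2'⟩ := hc2
          constructor
          · rintro (⟨⟨rfl, h1⟩, -, h2⟩ | ⟨⟨rfl, h1⟩, -, h2⟩) <;> exact ⟨rfl, by omega⟩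
          · rintro ⟨rfl, hj⟩
            exact Or.inr ⟨⟨rfl, by omega⟩, rfl, by omega⟩
        rw [hset, Finset.card_singleton, if_neg hc1, if_pos hc2, if_neg hv]
        norm_num
      · have hset : edgesBetween (tailT tail head n) (headT tail head n)
            (Sum.inr ⟨e', i'⟩) (Sum.inr ⟨e, i⟩) = ∅ := by
          unfold edgesBetween
          rw [Finset.filter_eq_empty_iff]
          rintro ⟨f, j⟩ -
          simp only [tailT_eq_inr, headT_eq_inr]
          rintro (⟨⟨rfl, h1⟩, rfl, h2⟩ | ⟨⟨rfl, h1⟩, rfl, h2⟩)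
          · exact hc1 ⟨rfl, by omega⟩
          · exact hc2 ⟨rfl, by omega⟩
        rw [hset, Finset.card_empty, if_neg hc1, if_neg hc2, if_neg hv]
        norm_num


/-- Padded restriction of a function on new vertices to the chain over `e`. -/
noncomputable def Yfun
    (x : (Σ e : E, Fin (n e - 1)) → ℤ) (e : E) (j : ℤ) : ℤ :=
  if hj : 0 ≤ j ∧ j < (n e : ℤ) - 1 then x ⟨e, ⟨j.toNat, by omega⟩⟩ else 0

lemma Yfun_coe
    (x : (Σ e : E, Fin (n e - 1)) → ℤ) (e : E) (i : Fin (n e - 1)) :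
    Yfun n x e ((i : ℕ) : ℤ) = x ⟨e, i⟩ := by
  have hc : (0:ℤ) ≤ ((i : ℕ) : ℤ) ∧ ((i : ℕ) : ℤ) < (n e : ℤ) - 1 := by
    have := i.isLt; omega
  rw [Yfun, dif_pos hc]
  exact congrArg x ((sigma_fin_mk_eq₁ n _ _ _ _).mpr ⟨rfl, by simp only [Fin.val_mk]; omega⟩)

lemma Yfun_left
    (x : (Σ e : E, Fin (n e - 1)) → ℤ) (e : E) (i : Fin (n e - 1)) :
    Yfun n x e (((i : ℕ) : ℤ) - 1)
      = if h : 0 < (i : ℕ) then x ⟨e, ⟨(i : ℕ) - 1, by have := i.isLt; omega⟩⟩ else 0 := by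
  have hi := i.isLt
  rw [Yfun]
  split_ifs with h1 h2 h2
  · exact congrArg x ((sigma_fin_mk_eq₁ n _ _ _ _).mpr ⟨rfl, by simp only [Fin.val_mk]; omega⟩)
  · exfalso; omega
  · exfalso; omega
  · rfl

lemma Yfun_right
    (x : (Σ e : E, Fin (n e - 1)) → ℤ) (e : E) (i : Fin (n e - 1)) :
    Yfun n x e (((i : ℕ) : ℤ) + 1)
      = if h : (i : ℕ) + 1 < n e - 1 then x ⟨e, ⟨(i : ℕ) + 1, h⟩⟩ else 0 := by
  have hi := i.isLt
  rw [Yfun]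
  split_ifs with h1 h2 h2
  · exact congrArg x ((sigma_fin_mk_eq₁ n _ _ _ _).mpr ⟨rfl, by simp only [Fin.val_mk]; omega⟩)
  · exfalso; omega
  · exfalso; omega
  · rfl

lemma chain_sum
    (x : (Σ e : E, Fin (n e - 1)) → ℤ) (e : E) (i : Fin (n e - 1)) :
    ∑ p : Σ e : E, Fin (n e - 1),
        x p * fireDelta (tailT tail head n) (headT tail head n) (Sum.inr p) (Sum.inr ⟨e, i⟩)
      = Yfun n x e (((i : ℕ) : ℤ) - 1) + Yfun n x e (((i : ℕ) : ℤ) + 1)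
        - 2 * Yfun n x e ((i : ℕ) : ℤ) := by
  have step : ∀ p : Σ e : E, Fin (n e - 1),
      x p * fireDelta (tailT tail head n) (headT tail head n) (Sum.inr p) (Sum.inr ⟨e, i⟩)
        = (if p.1 = e ∧ (p.2 : ℕ) + 1 = (i : ℕ) then x p else 0)
          + (if p.1 = e ∧ (p.2 : ℕ) = (i : ℕ) + 1 then x p else 0)
          - (if p = ⟨e, i⟩ then 2 * x p else 0) := by
    intro p
    rw [fireDelta_inr_inr tail head n p e i]
    split_ifs <;> ring
  rw [Finset.sum_congr rfl fun p _ => step p, Finset.sum_sub_distrib, Finset.sum_add_distrib]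
  have hS3 : ∑ p : Σ e : E, Fin (n e - 1), (if p = ⟨e, i⟩ then 2 * x p else 0)
      = 2 * x ⟨e, i⟩ := by
    rw [Finset.sum_ite_eq' Finset.univ (⟨e, i⟩ : Σ e : E, Fin (n e - 1)) (fun p => 2 * x p),
      if_pos (Finset.mem_univ _)]
  have hS1 : ∑ p : Σ e : E, Fin (n e - 1), (if p.1 = e ∧ (p.2 : ℕ) + 1 = (i : ℕ) then x p else 0)
      = Yfun n x e (((i : ℕ) : ℤ) - 1) := by
    rw [Yfun_left]
    split_ifs with hi0
    · have hcond : ∀ p : Σ e : E, Fin (n e - 1),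
          (p.1 = e ∧ (p.2 : ℕ) + 1 = (i : ℕ))
            ↔ p = ⟨e, ⟨(i : ℕ) - 1, by have := i.isLt; omega⟩⟩ := by
        rintro ⟨f, j⟩
        rw [sigma_fin_mk_eq₁]
        simp only [Fin.val_mk]
        constructor
        · rintro ⟨rfl, hj⟩; exact ⟨rfl, by omega⟩
        · rintro ⟨rfl, hj⟩; exact ⟨rfl, by omega⟩
      rw [Finset.sum_congr rfl fun p _ => by rw [if_congr (hcond p) rfl rfl]]
      rw [Finset.sum_ite_eq' Finset.univ _ x, if_pos (Finset.mem_univ _)]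
    · refine Finset.sum_eq_zero ?_
      rintro ⟨f, j⟩ -
      exact if_neg (by rintro ⟨rfl, hj⟩; omega)
  have hS2 : ∑ p : Σ e : E, Fin (n e - 1), (if p.1 = e ∧ (p.2 : ℕ) = (i : ℕ) + 1 then x p else 0)
      = Yfun n x e (((i : ℕ) : ℤ) + 1) := by
    rw [Yfun_right]
    split_ifs with hi0
    · have hcond : ∀ p : Σ e : E, Fin (n e - 1),
          (p.1 = e ∧ (p.2 : ℕ) = (i : ℕ) + 1)
            ↔ p = ⟨e, ⟨(i : ℕ) + 1, hi0⟩⟩ := by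
        rintro ⟨f, j⟩
        rw [sigma_fin_mk_eq₁]
      rw [Finset.sum_congr rfl fun p _ => by rw [if_congr (hcond p) rfl rfl]]
      rw [Finset.sum_ite_eq' Finset.univ _ x, if_pos (Finset.mem_univ _)]
    · refine Finset.sum_eq_zero ?_
      rintro ⟨f, j⟩ -
      refine if_neg ?_
      rintro ⟨rfl, hj⟩
      have := j.isLt
      omega
  rw [hS1, hS2, hS3, Yfun_coe]


/-- Key arithmetic lemma: an integer function on the chain of length `m`, vanishing
at and beyond the endpoints, whose discrete Laplacian is the difference of two
indicator functions of single points, must vanish identically. -/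
lemma key_path (m a b : ℕ) (ha : a < m) (hb : b < m) (y : ℤ → ℤ)
    (hy0 : ∀ j : ℤ, j < 0 → y j = 0) (hy1 : ∀ j : ℤ, (m : ℤ) - 1 ≤ j → y j = 0)
    (hd : ∀ j : ℤ, 0 ≤ j → j < (m : ℤ) - 1 →
      y (j - 1) + y (j + 1) - 2 * y j
        = (if (b : ℤ) = j + 1 then 1 else 0) - (if (a : ℤ) = j + 1 then 1 else 0)) :
    ∀ j : ℤ, y j = 0 := by
  have hm : 0 < m := lt_of_le_of_lt (Nat.zero_le a) ha
  have claimA : ∀ k : ℕ, k ≤ m - 1 → y (k : ℤ) - y ((k : ℤ) - 1)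
      = y 0 + (if 1 ≤ b ∧ b ≤ k then 1 else 0) - (if 1 ≤ a ∧ a ≤ k then 1 else 0) := by
    intro k
    induction k with
    | zero =>
      intro _
      simp only [Nat.cast_zero, zero_sub]
      rw [hy0 (-1) (by norm_num)]
      generalize y 0 = c
      split_ifs <;> omega
    | succ k ihk =>
      intro hk1
      have hk : k ≤ m - 1 := by omega
      have hdk := hd (k : ℤ) (by positivity) (by push_cast; omega)
      have ihk' := ihk hk
      have hcast : ((k + 1 : ℕ) : ℤ) = (k : ℤ) + 1 := by push_cast; ring
      rw [hcast, add_sub_cancel_right]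
      generalize hY1 : y ((k : ℤ) - 1) = Y1 at hdk ihk'
      generalize hY2 : y (k : ℤ) = Y2 at hdk ihk' ⊢
      generalize hY3 : y ((k : ℤ) + 1) = Y3 at hdk ⊢
      generalize hY0 : y 0 = Y0 at ihk' ⊢
      split_ifs at hdk ihk' ⊢ <;> omega
  have htel : ∑ k ∈ Finset.range m, (y (k : ℤ) - y ((k : ℤ) - 1)) = 0 := by
    have h1 : ∀ k ∈ Finset.range m, y (k : ℤ) - y ((k : ℤ) - 1)
        = (fun k : ℕ => y ((k : ℤ) - 1)) (k + 1) - (fun k : ℕ => y ((k : ℤ) - 1)) k := by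
      intro k _
      have : ((k + 1 : ℕ) : ℤ) - 1 = (k : ℤ) := by push_cast; ring
      simp only [this]
    rw [Finset.sum_congr rfl h1, Finset.sum_range_sub (fun k : ℕ => y ((k : ℤ) - 1))]
    simp only [Nat.cast_zero, zero_sub]
    rw [hy1 ((m : ℤ) - 1) le_rfl, hy0 (-1) (by norm_num)]
    ring
  have hS : ∀ t : ℕ, t < m →
      ∑ k ∈ Finset.range m, (if 1 ≤ t ∧ t ≤ k then (1 : ℤ) else 0)
        = if 1 ≤ t then ((m : ℤ) - t) else 0 := by
    intro t ht
    by_cases h1 : 1 ≤ t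
    · rw [if_pos h1]
      have h2 : ∀ k ∈ Finset.range m, (if 1 ≤ t ∧ t ≤ k then (1 : ℤ) else 0)
          = if t ≤ k then (1 : ℤ) else 0 := by
        intro k _; split_ifs <;> omega
      rw [Finset.sum_congr rfl h2, Finset.sum_boole]
      have h3 : (Finset.range m).filter (fun k => t ≤ k) = Finset.Ico t m := by
        ext k; simp only [Finset.mem_filter, Finset.mem_range, Finset.mem_Ico]; omega
      rw [h3, Nat.card_Ico]
      push_cast [Nat.cast_sub (le_of_lt ht)]
      ring
    · rw [if_neg h1]
      exact Finset.sum_eq_zero fun k _ => if_neg (by omega)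
  have htot : (m : ℤ) * y 0 + (if 1 ≤ b then ((m : ℤ) - b) else 0)
      - (if 1 ≤ a then ((m : ℤ) - a) else 0) = 0 := by
    calc (m : ℤ) * y 0 + (if 1 ≤ b then ((m : ℤ) - b) else 0)
          - (if 1 ≤ a then ((m : ℤ) - a) else 0)
        = ∑ k ∈ Finset.range m, (y 0 + (if 1 ≤ b ∧ b ≤ k then (1 : ℤ) else 0)
            - (if 1 ≤ a ∧ a ≤ k then (1 : ℤ) else 0)) := by
          rw [Finset.sum_sub_distrib, Finset.sum_add_distrib, Finset.sum_const,
            Finset.card_range, nsmul_eq_mul, hS b hb, hS a ha]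
      _ = ∑ k ∈ Finset.range m, (y (k : ℤ) - y ((k : ℤ) - 1)) :=
          Finset.sum_congr rfl fun k hk => (claimA k (by
            simp only [Finset.mem_range] at hk; omega)).symm
      _ = 0 := htel
  have hmul : ∀ c t : ℤ, -(m : ℤ) < t → t < (m : ℤ) → (m : ℤ) * c + t = 0 →
      c = 0 ∧ t = 0 := by
    intro c t h1 h2 h3
    have hm' : (0 : ℤ) < (m : ℤ) := by exact_mod_cast hm
    have hc0 : c = 0 := by
      by_contra hcne
      rcases (by omega : c ≤ -1 ∨ 1 ≤ c) with h4 | h4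
      · have := mul_le_mul_of_nonneg_left h4 (le_of_lt hm')
        linarith
      · have := mul_le_mul_of_nonneg_left h4 (le_of_lt hm')
        linarith
    exact ⟨hc0, by rw [hc0] at h3; linarith⟩
  have hab : a = b ∧ y 0 = 0 := by
    by_cases h1 : 1 ≤ a <;> by_cases h2 : 1 ≤ b
    · rw [if_pos h1, if_pos h2] at htot
      have := hmul (y 0) ((a : ℤ) - (b : ℤ)) (by omega) (by omega) (by linarith)
      exact ⟨by omega, this.1⟩
    · rw [if_pos h1, if_neg h2] at htot
      have := hmul (y 0) ((a : ℤ) - (m : ℤ)) (by omega) (by omega) (by linarith)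
      exact ⟨by omega, this.1⟩
    · rw [if_neg h1, if_pos h2] at htot
      have := hmul (y 0) ((m : ℤ) - (b : ℤ)) (by omega) (by omega) (by linarith)
      exact ⟨by omega, this.1⟩
    · rw [if_neg h1, if_neg h2] at htot
      have := hmul (y 0) 0 (by omega) (by omega) (by linarith)
      exact ⟨by omega, this.1⟩
  obtain ⟨hab', hy00⟩ := hab
  subst hab'
  have hzero : ∀ k : ℕ, k ≤ m - 1 → y (k : ℤ) = 0 := by
    intro k
    induction k with
    | zero => intro _; simpa using hy00
    | succ k ih =>
      intro hk
      have h1 := claimA (k + 1) hk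
      have hcast : ((k + 1 : ℕ) : ℤ) - 1 = (k : ℤ) := by push_cast; ring
      rw [hcast, hy00] at h1
      rw [ih (by omega)] at h1
      split_ifs at h1 <;> linarith
  intro j
  rcases lt_or_ge j 0 with hj | hj
  · exact hy0 j hj
  rcases le_or_gt ((m : ℤ) - 1) j with hj2 | hj2
  · exact hy1 j hj2
  · have hjt : j = ((j.toNat : ℕ) : ℤ) := (Int.toNat_of_nonneg hj).symm
    rw [hjt]
    exact hzero j.toNat (by omega)


/-- Net number of (positive minus negative) firings at each new vertex recorded in `l`. -/
noncomputable def xcount (l : List ((Σ e : E, Fin (n e - 1)) × Bool))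
    (p : Σ e : E, Fin (n e - 1)) : ℤ :=
  (l.map fun q => if q.1 = p then (if q.2 then (1 : ℤ) else -1) else 0).sum

lemma xcount_cons (q : (Σ e : E, Fin (n e - 1)) × Bool)
    (l : List ((Σ e : E, Fin (n e - 1)) × Bool)) (p : Σ e : E, Fin (n e - 1)) :
    xcount n (q :: l) p
      = (if q.1 = p then (if q.2 then (1 : ℤ) else -1) else 0) + xcount n l p := by
  simp [xcount]

lemma foldl_chipFire (l : List ((Σ e : E, Fin (n e - 1)) × Bool)) :
    ∀ (D : (V ⊕ Σ e : E, Fin (n e - 1)) → ℤ) (u : V ⊕ Σ e : E, Fin (n e - 1)),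
      (l.foldl (fun D x =>
        if x.2 then chipFire (tailT tail head n) (headT tail head n) D (Sum.inr x.1)
        else negChipFire (tailT tail head n) (headT tail head n) D (Sum.inr x.1)) D) u
      = D u + ∑ p : Σ e : E, Fin (n e - 1),
          xcount n l p * fireDelta (tailT tail head n) (headT tail head n) (Sum.inr p) u := by
  induction l with
  | nil => intro D u; simp [xcount]
  | cons q l ih =>
    intro D u
    rw [List.foldl_cons, ih]
    have hsplit : ∀ p : Σ e : E, Fin (n e - 1),
        xcount n (q :: l) p * fireDelta (tailT tail head n) (headT tail head n) (Sum.inr p) u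
          = (if q.1 = p then (if q.2 then (1 : ℤ) else -1)
              * fireDelta (tailT tail head n) (headT tail head n) (Sum.inr p) u else 0)
            + xcount n l p * fireDelta (tailT tail head n) (headT tail head n) (Sum.inr p) u := by
      intro p
      rw [xcount_cons]
      split_ifs <;> ring
    rw [Finset.sum_congr rfl fun p _ => hsplit p, Finset.sum_add_distrib]
    rw [Finset.sum_ite_eq Finset.univ q.1
      (fun p => (if q.2 then (1 : ℤ) else -1)
        * fireDelta (tailT tail head n) (headT tail head n) (Sum.inr p) u),
      if_pos (Finset.mem_univ _)]
    cases hq : q.2 <;> simp only [hq, if_true, if_false, Bool.false_eq_true,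
      chipFire, negChipFire] <;> ring

end Fin6

end Statement6Aux
/-- if one induced multidegree is obtained from another by a finite
sequence of chip-firing moves and inverse chip-firing moves performed only at new
vertices of the subdivision, then the two induced multidegrees are equal. -/
theorem statement_6 {V E : Type*} [Fintype V] [Fintype E] [DecidableEq V] [DecidableEq E]
    (tail head : E → V) (n : E → ℕ)
    (hloop : Loopless tail head) (hconn : MGConnected tail head)
    (hn : ∀ e, 0 < n e)
    (w w' : AdmMD V E n)
    (l : List ((Σ e : E, Fin (n e - 1)) × Bool))
    (h : l.foldl (fun D x =>
        if x.2 then chipFire (tailT tail head n) (headT tail head n) D (Sum.inr x.1)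
        else negChipFire (tailT tail head n) (headT tail head n) D (Sum.inr x.1))
      (inducedMD n w) = inducedMD n w') :
    inducedMD n w = inducedMD n w' := by
  have Hu : ∀ u, inducedMD n w' u = inducedMD n w u
      + ∑ p : Σ e : E, Fin (n e - 1),
          xcount n l p * fireDelta (tailT tail head n) (headT tail head n) (Sum.inr p) u := by
    intro u
    rw [← h]
    exact foldl_chipFire tail head n l (inducedMD n w) u
  have X0 : ∀ p : Σ e : E, Fin (n e - 1), xcount n l p = 0 := by
    rintro ⟨e, i⟩
    haveI : NeZero (n e) := ⟨(hn e).ne'⟩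
    have hd : ∀ j : ℤ, 0 ≤ j → j < (n e : ℤ) - 1 →
        Yfun n (xcount n l) e (j - 1) + Yfun n (xcount n l) e (j + 1)
          - 2 * Yfun n (xcount n l) e j
        = (if (((w'.mu e).val : ℕ) : ℤ) = j + 1 then 1 else 0)
          - (if (((w.mu e).val : ℕ) : ℤ) = j + 1 then 1 else 0) := by
      intro j hj0 hj1
      have hjlt : j.toNat < n e - 1 := by omega
      set i0 : Fin (n e - 1) := ⟨j.toNat, hjlt⟩ with hi0
      have hj' : ((i0 : ℕ) : ℤ) = j := by rw [hi0]; exact Int.toNat_of_nonneg hj0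
      have hH := Hu (Sum.inr ⟨e, i0⟩)
      rw [chain_sum tail head n (xcount n l) e i0] at hH
      rw [hj'] at hH
      simp only [inducedMD] at hH
      have ib : (if (((w'.mu e).val : ℕ) : ℤ) = j + 1 then (1 : ℤ) else 0)
          = (if ((w'.mu e).val : ℕ) = (i0 : ℕ) + 1 then (1 : ℤ) else 0) := by
        split_ifs <;> omega
      have ia : (if (((w.mu e).val : ℕ) : ℤ) = j + 1 then (1 : ℤ) else 0)
          = (if ((w.mu e).val : ℕ) = (i0 : ℕ) + 1 then (1 : ℤ) else 0) := by
        split_ifs <;> omega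
      rw [ib, ia]
      linarith [hH]
    have hz := key_path (n e) (w.mu e).val (w'.mu e).val (ZMod.val_lt _) (ZMod.val_lt _)
      (Yfun n (xcount n l) e)
      (fun j hj => by rw [Yfun, dif_neg (by omega)])
      (fun j hj => by rw [Yfun, dif_neg (by omega)]) hd ((i : ℕ) : ℤ)
    rw [Yfun_coe] at hz
    exact hz
  funext u
  rw [Hu u, Finset.sum_eq_zero fun p _ => by rw [X0 p, zero_mul]]
  ring

end LLS
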